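/- Let α, σ² > 0 and P_S > 0. The solution of the concave optimization problem maximize ∑_{x∈X} (1/2)·log₂(1 + P(x)/(σ² + α x²))·p(x) over nonnegative power allocations P : X → ℝ≥0 subject to ∑_{x∈X} P(x) p(x) ≤ P_S (where X is a finite set and p a probability mass function on X) is given by the water-filling allocation P*(x) = α · max{0, t² − x²}, where t > 0 is chosen so that ∑_{x∈X} α·max{0, t² − x²} p(x) = P_S. -/

import Mathlib

open Real Finset

lemma wf_key (N c a b : ℝ) (hN : 0 < N) (hc : 0 < c) (ha : 0 ≤ a) (hb : 0 ≤ b)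
    (hcase : N + b = c ∨ (b = 0 ∧ c ≤ N)) :
    Real.logb 2 (1 + a / N) - Real.logb 2 (1 + b / N) ≤ (a - b) / (c * Real.log 2) := by
  have hNb : 0 < N + b := by positivity
  have hNa : 0 < N + a := by positivity
  have h1 : (0:ℝ) < 1 + a / N := by positivity
  have h2 : (0:ℝ) < 1 + b / N := by positivity
  have hlog2 : 0 < Real.log 2 := Real.log_pos one_lt_two
  have hquot : (1 + a / N) / (1 + b / N) = (N + a) / (N + b) := by
    field_simp
  have hstep : Real.log (1 + a / N) - Real.log (1 + b / N) ≤ (a - b) / (N + b) := by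
    rw [← Real.log_div h1.ne' h2.ne', hquot]
    calc Real.log ((N + a) / (N + b)) ≤ (N + a) / (N + b) - 1 :=
          Real.log_le_sub_one_of_pos (div_pos hNa hNb)
      _ = (a - b) / (N + b) := by field_simp; ring
  have hstep2 : (a - b) / (N + b) ≤ (a - b) / c := by
    rcases hcase with h | ⟨hb0, hcN⟩
    · rw [h]
    · subst hb0
      simp only [sub_zero, add_zero]
      exact div_le_div_of_nonneg_left ha hc hcN
  have : Real.logb 2 (1 + a / N) - Real.logb 2 (1 + b / N)
      = (Real.log (1 + a / N) - Real.log (1 + b / N)) / Real.log 2 := by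
    simp [Real.logb, sub_div]
  rw [this, ← div_div]
  gcongr
  exact hstep.trans hstep2

/-- Water-filling optimality of the source power allocation (Theorem 1). -/
theorem waterfilling_optimal
    (X : Finset ℝ) (hX : X.Nonempty) (p : ℝ → ℝ)
    (hp0 : ∀ x ∈ X, 0 ≤ p x) (hp1 : ∑ x ∈ X, p x = 1)
    (α σ2 PS : ℝ) (hα : 0 < α) (hσ : 0 < σ2) (hPS : 0 < PS)
    (t : ℝ) (ht : 0 < t)
    (hcon : ∑ x ∈ X, α * max 0 (t ^ 2 - x ^ 2) * p x = PS)
    (Pw : ℝ → ℝ) (hPw : ∀ x ∈ X, 0 ≤ Pw x)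
    (hbudget : ∑ x ∈ X, Pw x * p x ≤ PS) :
    ∑ x ∈ X, (1 / 2) * Real.logb 2 (1 + Pw x / (σ2 + α * x ^ 2)) * p x ≤
      ∑ x ∈ X, (1 / 2) *
        Real.logb 2 (1 + α * max 0 (t ^ 2 - x ^ 2) / (σ2 + α * x ^ 2)) * p x := by
  set c : ℝ := σ2 + α * t ^ 2 with hcdef
  have hc : 0 < c := by positivity
  clear_value c
  have hlog2 : 0 < Real.log 2 := Real.log_pos one_lt_two
  have hpoint : ∀ x ∈ X,
      (1 / 2) * Real.logb 2 (1 + Pw x / (σ2 + α * x ^ 2)) * p x ≤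
        (1 / 2) * Real.logb 2 (1 + α * max 0 (t ^ 2 - x ^ 2) / (σ2 + α * x ^ 2)) * p x
          + ((Pw x - α * max 0 (t ^ 2 - x ^ 2)) * p x) / (2 * (c * Real.log 2)) := by
    intro x hx
    have hN : 0 < σ2 + α * x ^ 2 := by positivity
    have hb : 0 ≤ α * max 0 (t ^ 2 - x ^ 2) := by positivity
    have hcase : (σ2 + α * x ^ 2) + α * max 0 (t ^ 2 - x ^ 2) = c ∨
        (α * max 0 (t ^ 2 - x ^ 2) = 0 ∧ c ≤ σ2 + α * x ^ 2) := by
      rcases le_or_gt (t ^ 2 - x ^ 2) 0 with h | h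
      · right
        constructor
        · rw [max_eq_left h, mul_zero]
        · have : t ^ 2 ≤ x ^ 2 := by linarith
          rw [hcdef]; nlinarith
      · left
        rw [max_eq_right h.le]; rw [hcdef]; ring
    have hk := wf_key (σ2 + α * x ^ 2) c (Pw x) (α * max 0 (t ^ 2 - x ^ 2)) hN hc
      (hPw x hx) hb hcase
    have hpx := hp0 x hx
    have h2 := mul_le_mul_of_nonneg_right hk hpx
    rw [sub_mul] at h2
    have heq : (Pw x - α * max 0 (t ^ 2 - x ^ 2)) * p x / (2 * (c * Real.log 2))
        = ((Pw x - α * max 0 (t ^ 2 - x ^ 2)) / (c * Real.log 2)) * p x / 2 := by ring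
    rw [heq]
    linarith
  calc ∑ x ∈ X, (1 / 2) * Real.logb 2 (1 + Pw x / (σ2 + α * x ^ 2)) * p x
      ≤ ∑ x ∈ X, ((1 / 2) * Real.logb 2 (1 + α * max 0 (t ^ 2 - x ^ 2) / (σ2 + α * x ^ 2)) * p x
          + ((Pw x - α * max 0 (t ^ 2 - x ^ 2)) * p x) / (2 * (c * Real.log 2))) :=
        Finset.sum_le_sum hpoint
    _ = (∑ x ∈ X, (1 / 2) * Real.logb 2 (1 + α * max 0 (t ^ 2 - x ^ 2) / (σ2 + α * x ^ 2)) * p x)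
          + (∑ x ∈ X, (Pw x - α * max 0 (t ^ 2 - x ^ 2)) * p x) / (2 * (c * Real.log 2)) := by
        rw [Finset.sum_add_distrib, Finset.sum_div]
    _ ≤ ∑ x ∈ X, (1 / 2) * Real.logb 2 (1 + α * max 0 (t ^ 2 - x ^ 2) / (σ2 + α * x ^ 2)) * p x := by
        have hsum : ∑ x ∈ X, (Pw x - α * max 0 (t ^ 2 - x ^ 2)) * p x ≤ 0 := by
          have : ∑ x ∈ X, (Pw x - α * max 0 (t ^ 2 - x ^ 2)) * p x
              = (∑ x ∈ X, Pw x * p x) - ∑ x ∈ X, α * max 0 (t ^ 2 - x ^ 2) * p x := by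
            rw [← Finset.sum_sub_distrib]; congr 1; ext x; ring
          rw [this, hcon]; linarith
        have : (∑ x ∈ X, (Pw x - α * max 0 (t ^ 2 - x ^ 2)) * p x) / (2 * (c * Real.log 2)) ≤ 0 :=
          div_nonpos_of_nonpos_of_nonneg hsum (by positivity)
        linarith
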